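/- Let T be a quantum channel satisfying s-detailed balance with respect to a full-rank state ρ. Then for every matrix A, ⟨T(A), T(A)⟩_{*s} ≤ ⟨A, A⟩_{*s}, where ⟨A,B⟩_{*s} := tr(A† ρ^{s−1} B ρ^{−s}). If moreover T has ρ as its unique fixed point, its spectrum is in [0,1], and A ≠ 0 is traceless, then the inequality is strict. -/

import Mathlib

open Matrix
open scoped ComplexOrder

/-- Real matrix power of a Hermitian matrix, via the functional calculus. -/
noncomputable def mpow {n : Type*} [Fintype n] [DecidableEq n]
    (ρ : Matrix n n ℂ) (hρ : ρ.IsHermitian) (r : ℝ) : Matrix n n ℂ :=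
  hρ.cfc (fun x => x ^ r)

/-- The weighted sesquilinear form `⟨A,B⟩_{*s} = tr(Aᴴ ρ^{s-1} B ρ^{-s})`. -/
noncomputable def wInnerStar {n : Type*} [Fintype n] [DecidableEq n]
    (ρ : Matrix n n ℂ) (hρ : ρ.IsHermitian) (s : ℝ) (A B : Matrix n n ℂ) : ℂ :=
  (Aᴴ * mpow ρ hρ (s - 1) * B * mpow ρ hρ (-s)).trace

namespace ChannelAux

variable {n : Type*} [Fintype n] [DecidableEq n] {ρ : Matrix n n ℂ}

lemma mpow_def (hρ : ρ.IsHermitian) (r : ℝ) :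
    mpow ρ hρ r = (hρ.eigenvectorUnitary : Matrix n n ℂ) *
      diagonal (RCLike.ofReal ∘ (fun x => x ^ r) ∘ hρ.eigenvalues) *
      star (hρ.eigenvectorUnitary : Matrix n n ℂ) := rfl

lemma mpow_mul_mpow (hρ : ρ.PosDef) (a b : ℝ) :
    mpow ρ hρ.1 a * mpow ρ hρ.1 b = mpow ρ hρ.1 (a + b) := by
  rw [mpow_def, mpow_def, mpow_def]
  set U := (hρ.1.eigenvectorUnitary : Matrix n n ℂ) with hUdef
  have hU : star U * U = 1 := Unitary.coe_star_mul_self _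
  have hassoc : ∀ D₁ D₂ : Matrix n n ℂ, (U * D₁ * star U) * (U * D₂ * star U)
      = U * (D₁ * (star U * U) * D₂) * star U := by
    intro D₁ D₂; simp only [Matrix.mul_assoc]
  rw [hassoc, hU, Matrix.mul_one, diagonal_mul_diagonal]
  have : (fun i => (RCLike.ofReal ∘ (fun x : ℝ => x ^ a) ∘ hρ.1.eigenvalues) i *
      (RCLike.ofReal ∘ (fun x : ℝ => x ^ b) ∘ hρ.1.eigenvalues) i)
      = (RCLike.ofReal ∘ (fun x : ℝ => x ^ (a + b)) ∘ hρ.1.eigenvalues : n → ℂ) := by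
    funext i
    simp only [Function.comp_apply]
    rw [← RCLike.ofReal_mul, ← Real.rpow_add (hρ.eigenvalues_pos i)]
  rw [this]

lemma mpow_zero (hρ : ρ.IsHermitian) : mpow ρ hρ 0 = 1 := by
  rw [mpow_def]
  have : (RCLike.ofReal ∘ (fun x : ℝ => x ^ (0:ℝ)) ∘ hρ.eigenvalues : n → ℂ)
      = fun _ => (1 : ℂ) := by
    funext i; simp [Real.rpow_zero]
  rw [this, show (diagonal (fun _ => (1:ℂ)) : Matrix n n ℂ) = 1 from diagonal_one,
    Matrix.mul_one]
  exact (Matrix.mem_unitaryGroup_iff).mp hρ.eigenvectorUnitary.2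

lemma mpow_one (hρ : ρ.IsHermitian) : mpow ρ hρ 1 = ρ := by
  rw [mpow_def]
  have : (RCLike.ofReal ∘ (fun x : ℝ => x ^ (1:ℝ)) ∘ hρ.eigenvalues : n → ℂ)
      = (RCLike.ofReal ∘ hρ.eigenvalues : n → ℂ) := by
    funext i; simp [Real.rpow_one]
  rw [this]
  exact hρ.spectral_theorem.symm

lemma mpow_conjTranspose (hρ : ρ.IsHermitian) (r : ℝ) :
    (mpow ρ hρ r)ᴴ = mpow ρ hρ r := by
  rw [mpow_def]
  set U := (hρ.eigenvectorUnitary : Matrix n n ℂ) with hUdef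
  set D := diagonal (RCLike.ofReal ∘ (fun x : ℝ => x ^ r) ∘ hρ.eigenvalues : n → ℂ) with hDdef
  have hf : star (RCLike.ofReal ∘ (fun x : ℝ => x ^ r) ∘ hρ.eigenvalues : n → ℂ)
      = (RCLike.ofReal ∘ (fun x : ℝ => x ^ r) ∘ hρ.eigenvalues : n → ℂ) := by
    funext i; simp [Pi.star_apply, Complex.conj_ofReal]
  have hD : Dᴴ = D := by
    rw [hDdef, diagonal_conjTranspose, hf]
  calc (U * D * star U)ᴴ = (star U)ᴴ * (U * D)ᴴ := by rw [conjTranspose_mul]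
    _ = (star U)ᴴ * (Dᴴ * Uᴴ) := by rw [conjTranspose_mul]
    _ = U * D * star U := by
        rw [hD, ← star_eq_conjTranspose U, ← star_eq_conjTranspose (star U), star_star,
          ← Matrix.mul_assoc]

noncomputable def matEuc : Matrix n n ℂ ≃ₗ[ℂ] EuclideanSpace ℂ (n × n) where
  toFun A := (WithLp.equiv 2 _).symm (fun p => A p.1 p.2)
  map_add' A B := rfl
  map_smul' c A := rfl
  invFun x := Matrix.of (fun i j => x (i, j))
  left_inv A := rfl
  right_inv x := rfl

lemma matEuc_inner (A B : Matrix n n ℂ) :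
    inner ℂ (matEuc A) (matEuc B) = (Aᴴ * B).trace := by
  have : inner ℂ (matEuc A) (matEuc B)
      = dotProduct (star fun p : n × n => A p.1 p.2) (fun p : n × n => B p.1 p.2) := by
    have h0 : inner ℂ (matEuc A) (matEuc B)
        = dotProduct (fun p : n × n => B p.1 p.2) (star fun p : n × n => A p.1 p.2) := rfl
    rw [h0, dotProduct_comm]
  rw [this, Matrix.trace]
  simp only [dotProduct, Pi.star_apply, Fintype.sum_prod_type, Matrix.diag_apply,
    Matrix.mul_apply, Matrix.conjTranspose_apply, RCLike.star_def]
  rw [Finset.sum_comm]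

lemma symm_norm_sq_le {E : Type*} [NormedAddCommGroup E] [InnerProductSpace ℂ E]
    [FiniteDimensional ℂ E] (M : E →ₗ[ℂ] E) (hM : M.IsSymmetric)
    (hb : ∀ (μ : ℝ) (x : E), x ≠ 0 → M x = (μ : ℂ) • x → |μ| ≤ 1) (x : E) :
    ‖M x‖ ^ 2 ≤ ‖x‖ ^ 2 := by
  have hn : Module.finrank ℂ E = Module.finrank ℂ E := rfl
  set b := hM.eigenvectorBasis hn with hbdef
  have key : ∀ i, |hM.eigenvalues hn i| ≤ 1 := fun i =>
    hb _ _ (b.orthonormal.ne_zero i) (hM.apply_eigenvectorBasis hn i)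
  have h1 : ∀ y : E, ‖y‖ ^ 2 = ∑ i, ‖b.repr y i‖ ^ 2 := by
    intro y
    rw [← b.repr.norm_map y]
    exact PiLp.norm_sq_eq_of_L2 _ _
  rw [h1, h1 x]
  apply Finset.sum_le_sum
  intro i _
  rw [hM.eigenvectorBasis_apply_self_apply hn x i]
  rw [norm_mul, mul_pow]
  calc ‖(hM.eigenvalues hn i : ℂ)‖ ^ 2 * ‖b.repr x i‖ ^ 2
      ≤ 1 * ‖b.repr x i‖ ^ 2 := by
        apply mul_le_mul_of_nonneg_right _ (by positivity)
        have : ‖(hM.eigenvalues hn i : ℂ)‖ = |hM.eigenvalues hn i| := by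
          simp [Complex.norm_real]
        rw [this]
        calc |hM.eigenvalues hn i| ^ 2 ≤ 1 ^ 2 := by
              apply pow_le_pow_left₀ (abs_nonneg _) (key i)
          _ = 1 := one_pow 2
    _ = ‖b.repr x i‖ ^ 2 := one_mul _

lemma symm_norm_sq_lt {E : Type*} [NormedAddCommGroup E] [InnerProductSpace ℂ E]
    [FiniteDimensional ℂ E] (M : E →ₗ[ℂ] E) (hM : M.IsSymmetric)
    (hb : ∀ (μ : ℝ) (x : E), x ≠ 0 → M x = (μ : ℂ) • x → 0 ≤ μ ∧ μ ≤ 1) (x : E)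
    (hfix : ∀ y : E, M y = y → inner ℂ y x = 0) (hx : x ≠ 0) :
    ‖M x‖ ^ 2 < ‖x‖ ^ 2 := by
  have hn : Module.finrank ℂ E = Module.finrank ℂ E := rfl
  set b := hM.eigenvectorBasis hn with hbdef
  have key : ∀ i, 0 ≤ hM.eigenvalues hn i ∧ hM.eigenvalues hn i ≤ 1 := fun i =>
    hb _ _ (b.orthonormal.ne_zero i) (hM.apply_eigenvectorBasis hn i)
  have hlt : ∀ i, b.repr x i ≠ 0 → hM.eigenvalues hn i < 1 := by
    intro i hi
    rcases lt_or_eq_of_le (key i).2 with h | h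
    · exact h
    · exfalso
      apply hi
      have hMb : M (b i) = b i := by
        rw [hM.apply_eigenvectorBasis hn i, h]; simp; rfl
      rw [b.repr_apply_apply]
      exact hfix (b i) hMb
  obtain ⟨i₀, hi₀⟩ : ∃ i, b.repr x i ≠ 0 := by
    by_contra h
    push_neg at h
    apply hx
    have : b.repr x = 0 := by
      ext i; exact h i
    simpa using b.repr.map_eq_zero_iff.mp this
  have h1 : ∀ y : E, ‖y‖ ^ 2 = ∑ i, ‖b.repr y i‖ ^ 2 := by
    intro y
    rw [← b.repr.norm_map y]
    exact PiLp.norm_sq_eq_of_L2 _ _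
  rw [h1, h1 x]
  have hterm : ∀ i, ‖b.repr (M x) i‖ ^ 2 ≤ ‖b.repr x i‖ ^ 2 := by
    intro i
    rw [hM.eigenvectorBasis_apply_self_apply hn x i, norm_mul, mul_pow]
    have hnrm : ‖(hM.eigenvalues hn i : ℂ)‖ = |hM.eigenvalues hn i| := by
      simp [Complex.norm_real]
    calc ‖(hM.eigenvalues hn i : ℂ)‖ ^ 2 * ‖b.repr x i‖ ^ 2
        ≤ 1 * ‖b.repr x i‖ ^ 2 := by
          apply mul_le_mul_of_nonneg_right _ (by positivity)
          rw [hnrm]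
          calc |hM.eigenvalues hn i| ^ 2 ≤ 1 ^ 2 :=
                pow_le_pow_left₀ (abs_nonneg _) (abs_le.mpr ⟨by linarith [(key i).1], (key i).2⟩) 2
            _ = 1 := one_pow 2
      _ = ‖b.repr x i‖ ^ 2 := one_mul _
  apply Finset.sum_lt_sum (fun i _ => hterm i)
  refine ⟨i₀, Finset.mem_univ _, ?_⟩
  rw [hM.eigenvectorBasis_apply_self_apply hn x i₀, norm_mul, mul_pow]
  have hnrm : ‖(hM.eigenvalues hn i₀ : ℂ)‖ = |hM.eigenvalues hn i₀| := by
    simp [Complex.norm_real]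
  have hc : 0 < ‖b.repr x i₀‖ ^ 2 := by
    have := norm_pos_iff.mpr hi₀
    positivity
  have habs : |hM.eigenvalues hn i₀| ^ 2 < 1 := by
    have h01 := key i₀
    have := hlt i₀ hi₀
    rw [abs_of_nonneg h01.1]
    nlinarith
  calc ‖(hM.eigenvalues hn i₀ : ℂ)‖ ^ 2 * ‖b.repr x i₀‖ ^ 2
      < 1 * ‖b.repr x i₀‖ ^ 2 := by
        apply mul_lt_mul_of_pos_right _ hc
        rw [hnrm]; exact habs
    _ = ‖b.repr x i₀‖ ^ 2 := one_mul _

lemma psd_conj_herm {A B : Matrix n n ℂ} (hA : A.PosSemidef) (hB : Bᴴ = B) :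
    (B * A * B).PosSemidef := by
  have := hA.mul_mul_conjTranspose_same B
  rwa [hB] at this

lemma smul_one_add_smul_diag {Z : Matrix n n ℂ} (hZ : Z.IsHermitian) (c t : ℝ) :
    (c:ℂ) • (1 : Matrix n n ℂ) + (t:ℂ) • Z =
      (hZ.eigenvectorUnitary : Matrix n n ℂ) *
        diagonal (fun i => ((c + t * hZ.eigenvalues i : ℝ) : ℂ)) *
        star (hZ.eigenvectorUnitary : Matrix n n ℂ) := by
  set U := (hZ.eigenvectorUnitary : Matrix n n ℂ) with hUdef
  set D := diagonal (RCLike.ofReal ∘ hZ.eigenvalues : n → ℂ) with hDdef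
  have hU1 : U * star U = 1 := (Matrix.mem_unitaryGroup_iff).mp hZ.eigenvectorUnitary.2
  have keydiag : (c:ℂ) • (1 : Matrix n n ℂ) + (t:ℂ) • D
      = diagonal (fun i => ((c + t * hZ.eigenvalues i : ℝ) : ℂ)) := by
    ext i j
    by_cases hij : i = j
    · subst hij
      simp only [Matrix.add_apply, Matrix.smul_apply, Matrix.one_apply_eq, hDdef,
        Matrix.diagonal_apply_eq, Function.comp_apply, smul_eq_mul]
      push_cast
      rw [mul_one]
      rfl
    · simp [hDdef, Matrix.diagonal_apply_ne _ hij, Matrix.one_apply_ne hij]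
  have h1 : (c:ℂ) • (1 : Matrix n n ℂ) = U * ((c:ℂ) • (1 : Matrix n n ℂ)) * star U := by
    rw [Matrix.mul_smul, Matrix.mul_one, Matrix.smul_mul, hU1]
  have h2 : (t:ℂ) • Z = U * ((t:ℂ) • D) * star U := by
    conv_lhs => rw [hZ.spectral_theorem, Unitary.conjStarAlgAut_apply]
    rw [Matrix.mul_smul, Matrix.smul_mul]
  rw [← keydiag, Matrix.mul_add, Matrix.add_mul, ← h1, ← h2]

lemma psd_smul_one_add_smul {Z : Matrix n n ℂ} (hZ : Z.IsHermitian) (c t : ℝ)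
    (h : ∀ i, 0 ≤ c + t * hZ.eigenvalues i) :
    ((c:ℂ) • (1 : Matrix n n ℂ) + (t:ℂ) • Z).PosSemidef := by
  rw [smul_one_add_smul_diag hZ c t, Matrix.star_eq_conjTranspose]
  exact (posSemidef_diagonal_iff.mpr fun i => by
    exact_mod_cast Complex.zero_le_real.mpr (h i)).mul_mul_conjTranspose_same _

lemma nonneg_of_psd_smul {Z : Matrix n n ℂ} (hZ : Z.IsHermitian) (c t : ℝ)
    (h : ((c:ℂ) • (1 : Matrix n n ℂ) + (t:ℂ) • Z).PosSemidef) (i : n) :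
    0 ≤ c + t * hZ.eigenvalues i := by
  set v : n → ℂ := ⇑(hZ.eigenvectorBasis i) with hvdef
  have hvZ : Z *ᵥ v = hZ.eigenvalues i • v := hZ.mulVec_eigenvectorBasis i
  have hvv : dotProduct (star v) v = 1 := by
    have h1 : inner ℂ (hZ.eigenvectorBasis i) (hZ.eigenvectorBasis i) = 1 := by
      rw [inner_self_eq_norm_sq_to_K, hZ.eigenvectorBasis.orthonormal.1 i]
      norm_num
    rw [EuclideanSpace.inner_eq_star_dotProduct, dotProduct_comm] at h1
    exact h1
  have hcalc : (((c:ℂ) • (1 : Matrix n n ℂ) + (t:ℂ) • Z)) *ᵥ v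
      = ((c + t * hZ.eigenvalues i : ℝ) : ℂ) • v := by
    rw [Matrix.add_mulVec, Matrix.smul_mulVec, Matrix.smul_mulVec,
      Matrix.one_mulVec, hvZ]
    ext j
    simp only [Pi.add_apply, Pi.smul_apply, smul_eq_mul, Complex.real_smul]
    push_cast
    ring
  have hd := h.dotProduct_mulVec_nonneg v
  rw [hcalc, dotProduct_smul, hvv, smul_eq_mul, mul_one] at hd
  exact Complex.zero_le_real.mp hd

lemma exists_eigen_ne_zero {Z : Matrix n n ℂ} (hZ : Z.IsHermitian) (hZne : Z ≠ 0) :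
    ∃ i, hZ.eigenvalues i ≠ 0 := by
  by_contra h
  push_neg at h
  apply hZne
  have : diagonal (RCLike.ofReal ∘ hZ.eigenvalues : n → ℂ) = 0 := by
    rw [show (RCLike.ofReal ∘ hZ.eigenvalues : n → ℂ) = fun _ => 0 by funext i; simp [h i]]
    exact Matrix.diagonal_zero
  rw [hZ.spectral_theorem, this, map_zero]

lemma trace_conjT_mul_self_zero {B : Matrix n n ℂ} (h : (Bᴴ * B).trace = 0) : B = 0 := by
  have hdiag : ∀ j, (Bᴴ * B) j j = dotProduct (star fun i => B i j) (fun i => B i j) := by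
    intro j
    simp [Matrix.mul_apply, dotProduct, Matrix.conjTranspose_apply]
  have hnonneg : ∀ j, 0 ≤ (Bᴴ * B) j j := by
    intro j
    rw [hdiag j]
    exact dotProduct_star_self_nonneg _
  have hzero : ∀ j ∈ Finset.univ, (Bᴴ * B) j j = 0 := by
    rw [Matrix.trace] at h
    exact (Finset.sum_eq_zero_iff_of_nonneg fun j _ => hnonneg j).mp h
  ext i j
  have := hzero j (Finset.mem_univ j)
  rw [hdiag j] at this
  have := dotProduct_star_self_eq_zero.mp this
  exact congrFun this i

lemma psd_trace_zero {A : Matrix n n ℂ} (hA : A.PosSemidef) (h : A.trace = 0) : A = 0 := by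
  exact hA.trace_eq_zero_iff.mp h

lemma psd_diag_nonneg {A : Matrix n n ℂ} (hA : A.PosSemidef) (i : n) : 0 ≤ A i i := by
  have := hA.dotProduct_mulVec_nonneg (Pi.single i 1)
  have hmv : A *ᵥ Pi.single i 1 = fun j => A j i := by
    funext j
    simp [Matrix.mulVec_single]
  rw [hmv] at this
  have hdp : dotProduct (star (Pi.single i 1 : n → ℂ)) (fun j => A j i) = A i i := by
    simp [dotProduct, Pi.single_apply, apply_ite (star : ℂ → ℂ), Finset.sum_ite_eq']
  rwa [hdp] at this

lemma psd_trace_nonneg {A : Matrix n n ℂ} (hA : A.PosSemidef) : 0 ≤ A.trace := by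
  rw [Matrix.trace]
  exact Finset.sum_nonneg fun i _ => psd_diag_nonneg hA i

lemma psd_real_smul {A : Matrix n n ℂ} (hA : A.PosSemidef) {r : ℝ} (hr : 0 ≤ r) :
    (((r:ℂ)) • A).PosSemidef := by
  refine Matrix.PosSemidef.of_dotProduct_mulVec_nonneg ?_ ?_
  · show ((r:ℂ) • A)ᴴ = (r:ℂ) • A
    rw [Matrix.conjTranspose_smul, hA.1.eq]
    congr 1
    simp [Complex.conj_ofReal]
  · intro x
    rw [Matrix.smul_mulVec, dotProduct_smul, smul_eq_mul]
    exact mul_nonneg (Complex.zero_le_real.mpr hr) (hA.dotProduct_mulVec_nonneg x)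

lemma herm_eig_bound (hρ : ρ.PosDef) (T : Matrix n n ℂ →ₗ[ℂ] Matrix n n ℂ)
    (hpsd : ∀ X : Matrix n n ℂ, X.PosSemidef → (T X).PosSemidef) (hfixρ : T ρ = ρ)
    (μ : ℝ) (Y : Matrix n n ℂ) (hY : Y.IsHermitian) (hYne : Y ≠ 0)
    (hTY : T Y = ((μ:ℝ):ℂ) • Y) : |μ| ≤ 1 := by
  have hne : Nonempty n := by
    by_contra h
    rw [not_nonempty_iff] at h
    exact hYne (by ext i j; exact (h.false i).elim)
  set P : ℝ → Matrix n n ℂ := fun a => mpow ρ hρ.1 a with hPdef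
  have hPadd : ∀ a b, P a * P b = P (a + b) := fun a b => mpow_mul_mpow hρ a b
  have hP0 : P 0 = 1 := mpow_zero hρ.1
  have hP1 : P 1 = ρ := mpow_one hρ.1
  have hPH : ∀ a, (P a)ᴴ = P a := fun a => mpow_conjTranspose hρ.1 a
  set Z := P (-(1/2)) * Y * P (-(1/2)) with hZdef
  have hZH : Z.IsHermitian := by
    show Zᴴ = Z
    rw [hZdef, Matrix.conjTranspose_mul, Matrix.conjTranspose_mul, hPH, hY.eq,
      ← Matrix.mul_assoc]
  have hrecover : P (1/2) * Z * P (1/2) = Y := by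
    rw [hZdef]
    calc P (1/2) * (P (-(1/2)) * Y * P (-(1/2))) * P (1/2)
        = (P (1/2) * P (-(1/2))) * Y * (P (-(1/2)) * P (1/2)) := by
          simp only [Matrix.mul_assoc]
      _ = Y := by
          rw [hPadd, hPadd, show (1/2 : ℝ) + -(1/2) = 0 by norm_num,
            show (-(1/2) : ℝ) + 1/2 = 0 by norm_num, hP0, Matrix.one_mul, Matrix.mul_one]
  have hZne : Z ≠ 0 := fun h => hYne (by rw [← hrecover, h, Matrix.mul_zero, Matrix.zero_mul])
  have hFne : (Finset.univ : Finset n).Nonempty := Finset.univ_nonempty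
  set c := Finset.univ.sup' hFne (fun i => |hZH.eigenvalues i|) with hcdef
  have hcb : ∀ i, |hZH.eigenvalues i| ≤ c := fun i => Finset.le_sup' (fun j => |hZH.eigenvalues j|) (Finset.mem_univ i)
  have hcpos : 0 < c := by
    obtain ⟨i, hi⟩ := exists_eigen_ne_zero hZH hZne
    exact lt_of_lt_of_le (abs_pos.mpr hi) (hcb i)
  have main : ∀ t : ℝ, |t| = 1 → ∀ i, 0 ≤ c + (t * μ) * hZH.eigenvalues i := by
    intro t ht
    have h0 : ∀ i, 0 ≤ c + t * hZH.eigenvalues i := by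
      intro i
      have h1 : -(t * hZH.eigenvalues i) ≤ c := by
        calc -(t * hZH.eigenvalues i) ≤ |t * hZH.eigenvalues i| := neg_le_abs _
          _ = |hZH.eigenvalues i| := by rw [abs_mul, ht, one_mul]
          _ ≤ c := hcb i
      linarith
    have psdZ := psd_smul_one_add_smul hZH c t h0
    have e1 : P (1/2) * ((c:ℂ) • (1 : Matrix n n ℂ)) * P (1/2) = (c:ℂ) • ρ := by
      rw [Matrix.mul_smul, Matrix.mul_one, Matrix.smul_mul, hPadd,
        show (1/2 : ℝ) + 1/2 = 1 by norm_num, hP1]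
    have e2 : P (1/2) * ((t:ℂ) • Z) * P (1/2) = (t:ℂ) • Y := by
      rw [Matrix.mul_smul, Matrix.smul_mul, hrecover]
    have conj1 : P (1/2) * ((c:ℂ) • (1 : Matrix n n ℂ) + (t:ℂ) • Z) * P (1/2)
        = (c:ℂ) • ρ + (t:ℂ) • Y := by
      rw [Matrix.mul_add, Matrix.add_mul, e1, e2]
    have psdY : ((c:ℂ) • ρ + (t:ℂ) • Y).PosSemidef := by
      rw [← conj1]; exact psd_conj_herm psdZ (hPH _)
    have psdT : ((c:ℂ) • ρ + ((t * μ : ℝ) : ℂ) • Y).PosSemidef := by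
      have h2 := hpsd _ psdY
      rw [map_add, _root_.map_smul, _root_.map_smul, hfixρ, hTY, smul_smul] at h2
      convert h2 using 3
      push_cast
      ring
    have e3 : P (-(1/2)) * ((c:ℂ) • ρ) * P (-(1/2)) = (c:ℂ) • (1 : Matrix n n ℂ) := by
      rw [← hP1, Matrix.mul_smul, Matrix.smul_mul, hPadd, hPadd,
        show (-(1/2) : ℝ) + 1 + -(1/2) = 0 by norm_num, hP0]
    have e4 : P (-(1/2)) * (((t * μ : ℝ) : ℂ) • Y) * P (-(1/2)) = ((t * μ : ℝ) : ℂ) • Z := by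
      rw [Matrix.mul_smul, Matrix.smul_mul, hZdef]
    have conj2 : P (-(1/2)) * ((c:ℂ) • ρ + ((t * μ : ℝ) : ℂ) • Y) * P (-(1/2))
        = (c:ℂ) • (1 : Matrix n n ℂ) + ((t * μ : ℝ) : ℂ) • Z := by
      rw [Matrix.mul_add, Matrix.add_mul, e3, e4]
    have psdZ2 : ((c:ℂ) • (1 : Matrix n n ℂ) + ((t * μ : ℝ) : ℂ) • Z).PosSemidef := by
      rw [← conj2]; exact psd_conj_herm psdT (hPH _)
    exact nonneg_of_psd_smul hZH c (t * μ) psdZ2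
  obtain ⟨i₀, -, hi₀⟩ := Finset.exists_mem_eq_sup' hFne (fun i => |hZH.eigenvalues i|)
  have h1 := main 1 (by norm_num) i₀
  have h2 := main (-1) (by norm_num) i₀
  have habs : |μ| * |hZH.eigenvalues i₀| ≤ c := by
    rw [← abs_mul]
    rcases abs_cases (μ * hZH.eigenvalues i₀) with ⟨h, -⟩ | ⟨h, -⟩ <;> rw [h] <;> nlinarith
  rw [← hcdef] at hi₀
  rw [← hi₀] at habs
  nlinarith [habs, hcpos]

lemma herm_fixed (hρ : ρ.PosDef) (htr : ρ.trace = 1) (T : Matrix n n ℂ →ₗ[ℂ] Matrix n n ℂ)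
    (hpsd : ∀ X : Matrix n n ℂ, X.PosSemidef → (T X).PosSemidef) (hfixρ : T ρ = ρ)
    (huniq : ∀ σ : Matrix n n ℂ, σ.PosSemidef → σ.trace = 1 → T σ = σ → σ = ρ)
    (Y : Matrix n n ℂ) (hY : Y.IsHermitian) (hTY : T Y = Y) :
    ∃ t : ℝ, Y = (t:ℂ) • ρ := by
  by_cases hYne : Y = 0
  · exact ⟨0, by simp [hYne]⟩
  have hne : Nonempty n := by
    by_contra h
    rw [not_nonempty_iff] at h
    exact hYne (by ext i j; exact (h.false i).elim)
  set P : ℝ → Matrix n n ℂ := fun a => mpow ρ hρ.1 a with hPdef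
  have hPadd : ∀ a b, P a * P b = P (a + b) := fun a b => mpow_mul_mpow hρ a b
  have hP0 : P 0 = 1 := mpow_zero hρ.1
  have hP1 : P 1 = ρ := mpow_one hρ.1
  have hPH : ∀ a, (P a)ᴴ = P a := fun a => mpow_conjTranspose hρ.1 a
  set Z := P (-(1/2)) * Y * P (-(1/2)) with hZdef
  have hZH : Z.IsHermitian := by
    show Zᴴ = Z
    rw [hZdef, Matrix.conjTranspose_mul, Matrix.conjTranspose_mul, hPH, hY.eq,
      ← Matrix.mul_assoc]
  have hrecover : P (1/2) * Z * P (1/2) = Y := by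
    rw [hZdef]
    calc P (1/2) * (P (-(1/2)) * Y * P (-(1/2))) * P (1/2)
        = (P (1/2) * P (-(1/2))) * Y * (P (-(1/2)) * P (1/2)) := by
          simp only [Matrix.mul_assoc]
      _ = Y := by
          rw [hPadd, hPadd, show (1/2 : ℝ) + -(1/2) = 0 by norm_num,
            show (-(1/2) : ℝ) + 1/2 = 0 by norm_num, hP0, Matrix.one_mul, Matrix.mul_one]
  have hFne : (Finset.univ : Finset n).Nonempty := Finset.univ_nonempty
  set c := Finset.univ.sup' hFne (fun i => |hZH.eigenvalues i|) with hcdef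
  have hcb : ∀ i, |hZH.eigenvalues i| ≤ c := fun i => Finset.le_sup' (fun j => |hZH.eigenvalues j|) (Finset.mem_univ i)
  have h0 : ∀ i, 0 ≤ c + 1 * hZH.eigenvalues i := by
    intro i
    have h1 : -(hZH.eigenvalues i) ≤ c := le_trans (neg_le_abs _) (hcb i)
    linarith
  have psdZ := psd_smul_one_add_smul hZH c 1 h0
  have e1 : P (1/2) * ((c:ℂ) • (1 : Matrix n n ℂ)) * P (1/2) = (c:ℂ) • ρ := by
    rw [Matrix.mul_smul, Matrix.mul_one, Matrix.smul_mul, hPadd,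
      show (1/2 : ℝ) + 1/2 = 1 by norm_num, hP1]
  have e2 : P (1/2) * (((1:ℝ):ℂ) • Z) * P (1/2) = ((1:ℝ):ℂ) • Y := by
    rw [Matrix.mul_smul, Matrix.smul_mul, hrecover]
  have conj1 : P (1/2) * ((c:ℂ) • (1 : Matrix n n ℂ) + ((1:ℝ):ℂ) • Z) * P (1/2)
      = (c:ℂ) • ρ + ((1:ℝ):ℂ) • Y := by
    rw [Matrix.mul_add, Matrix.add_mul, e1, e2]
  have psdY : ((c:ℂ) • ρ + Y).PosSemidef := by
    have := psd_conj_herm psdZ (hPH (1/2 : ℝ))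
    rw [conj1] at this
    simpa using this
  set σ' := (c:ℂ) • ρ + Y with hσ'def
  have hfixσ' : T σ' = σ' := by
    rw [hσ'def, map_add, _root_.map_smul, hfixρ, hTY]
  have htrσ' : σ'.trace = ((c + (Y.trace).re : ℝ) : ℂ) := by
    have hreal : Y.trace = ((Y.trace).re : ℂ) := by
      have h := Matrix.trace_conjTranspose Y
      rw [hY.eq] at h
      exact (Complex.conj_eq_iff_re.mp h.symm).symm

    rw [hσ'def, Matrix.trace_add, Matrix.trace_smul, htr, smul_eq_mul, mul_one]
    conv_lhs => rw [hreal]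
    push_cast
    ring
  have htrnn : 0 ≤ c + (Y.trace).re := by
    have := psd_trace_nonneg psdY
    rw [htrσ'] at this
    exact Complex.zero_le_real.mp this
  by_cases hzero : c + (Y.trace).re = 0
  · have hσ'0 : σ' = 0 := psd_trace_zero psdY (by rw [htrσ', hzero]; norm_num)
    refine ⟨-c, ?_⟩
    have : Y = -((c:ℂ) • ρ) := by
      rw [hσ'def] at hσ'0
      linear_combination (norm := module) hσ'0
    rw [this]
    push_cast
    module
  · set t0 := c + (Y.trace).re with ht0def
    have ht0pos : 0 < t0 := lt_of_le_of_ne htrnn (Ne.symm hzero)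
    set σ := ((t0⁻¹ : ℝ) : ℂ) • σ' with hσdef
    have hσpsd : σ.PosSemidef := psd_real_smul psdY (by positivity)
    have hσtr : σ.trace = 1 := by
      rw [hσdef, Matrix.trace_smul, htrσ', smul_eq_mul]
      rw [← Complex.ofReal_mul]
      rw [inv_mul_cancel₀ (ne_of_gt ht0pos)]
      norm_num
    have hσfix : T σ = σ := by rw [hσdef, _root_.map_smul, hfixσ']
    have hσρ := huniq σ hσpsd hσtr hσfix
    refine ⟨t0 - c, ?_⟩
    have hσ'eq : σ' = ((t0 : ℝ) : ℂ) • ρ := by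
      rw [← hσρ, hσdef, smul_smul, ← Complex.ofReal_mul, mul_inv_cancel₀ (ne_of_gt ht0pos)]
      norm_num
    have : Y = ((t0 : ℝ) : ℂ) • ρ - (c:ℂ) • ρ := by
      rw [← hσ'eq, hσ'def]
      abel
    rw [this]
    push_cast
    module



noncomputable def Phi (hρ : ρ.PosDef) (s : ℝ) : Matrix n n ℂ ≃ₗ[ℂ] Matrix n n ℂ where
  toFun A := mpow ρ hρ.1 ((s-1)/2) * A * mpow ρ hρ.1 (-(s/2))
  map_add' A B := by rw [Matrix.mul_add, Matrix.add_mul]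
  map_smul' c A := by rw [Matrix.mul_smul, Matrix.smul_mul]; rfl
  invFun B := mpow ρ hρ.1 ((1-s)/2) * B * mpow ρ hρ.1 (s/2)
  left_inv A := by
    show mpow ρ hρ.1 ((1-s)/2) * (mpow ρ hρ.1 ((s-1)/2) * A * mpow ρ hρ.1 (-(s/2)))
        * mpow ρ hρ.1 (s/2) = A
    calc mpow ρ hρ.1 ((1-s)/2) * (mpow ρ hρ.1 ((s-1)/2) * A * mpow ρ hρ.1 (-(s/2)))
          * mpow ρ hρ.1 (s/2)
        = (mpow ρ hρ.1 ((1-s)/2) * mpow ρ hρ.1 ((s-1)/2)) * A *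
            (mpow ρ hρ.1 (-(s/2)) * mpow ρ hρ.1 (s/2)) := by simp only [Matrix.mul_assoc]
      _ = A := by
          rw [mpow_mul_mpow hρ, mpow_mul_mpow hρ, show ((1-s)/2 + (s-1)/2 : ℝ) = 0 by ring,
            show (-(s/2) + s/2 : ℝ) = 0 by ring, mpow_zero, Matrix.one_mul, Matrix.mul_one]
  right_inv B := by
    show mpow ρ hρ.1 ((s-1)/2) * (mpow ρ hρ.1 ((1-s)/2) * B * mpow ρ hρ.1 (s/2))
        * mpow ρ hρ.1 (-(s/2)) = B
    calc mpow ρ hρ.1 ((s-1)/2) * (mpow ρ hρ.1 ((1-s)/2) * B * mpow ρ hρ.1 (s/2))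
          * mpow ρ hρ.1 (-(s/2))
        = (mpow ρ hρ.1 ((s-1)/2) * mpow ρ hρ.1 ((1-s)/2)) * B *
            (mpow ρ hρ.1 (s/2) * mpow ρ hρ.1 (-(s/2))) := by simp only [Matrix.mul_assoc]
      _ = B := by
          rw [mpow_mul_mpow hρ, mpow_mul_mpow hρ, show ((s-1)/2 + (1-s)/2 : ℝ) = 0 by ring,
            show (s/2 + -(s/2) : ℝ) = 0 by ring, mpow_zero, Matrix.one_mul, Matrix.mul_one]

noncomputable def Gmap (hρ : ρ.PosDef) (s : ℝ) : Matrix n n ℂ ≃ₗ[ℂ] EuclideanSpace ℂ (n × n) :=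
  (Phi hρ s).trans matEuc

lemma Gmap_inner (hρ : ρ.PosDef) (s : ℝ) (A B : Matrix n n ℂ) :
    inner ℂ (Gmap hρ s A) (Gmap hρ s B) = wInnerStar ρ hρ.1 s A B := by
  show inner ℂ (matEuc (Phi hρ s A)) (matEuc (Phi hρ s B)) = _
  rw [matEuc_inner]
  unfold wInnerStar
  have hPH := fun a => mpow_conjTranspose hρ.1 a
  have hXc : (Phi hρ s A)ᴴ = mpow ρ hρ.1 (-(s/2)) * Aᴴ * mpow ρ hρ.1 ((s-1)/2) := by
    show (mpow ρ hρ.1 ((s-1)/2) * A * mpow ρ hρ.1 (-(s/2)))ᴴ = _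
    rw [Matrix.conjTranspose_mul, Matrix.conjTranspose_mul, hPH, hPH, ← Matrix.mul_assoc]
  have e : (Phi hρ s A)ᴴ * (Phi hρ s B)
      = mpow ρ hρ.1 (-(s/2)) * (Aᴴ * mpow ρ hρ.1 (s-1) * B) * mpow ρ hρ.1 (-(s/2)) := by
    show (Phi hρ s A)ᴴ * (mpow ρ hρ.1 ((s-1)/2) * B * mpow ρ hρ.1 (-(s/2))) = _
    rw [hXc]
    calc (mpow ρ hρ.1 (-(s/2)) * Aᴴ * mpow ρ hρ.1 ((s-1)/2)) *
          (mpow ρ hρ.1 ((s-1)/2) * B * mpow ρ hρ.1 (-(s/2)))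
        = mpow ρ hρ.1 (-(s/2)) * (Aᴴ * (mpow ρ hρ.1 ((s-1)/2) * mpow ρ hρ.1 ((s-1)/2)) * B) *
            mpow ρ hρ.1 (-(s/2)) := by simp only [Matrix.mul_assoc]
      _ = _ := by rw [mpow_mul_mpow hρ, show ((s-1)/2 + (s-1)/2 : ℝ) = s - 1 by ring]
  rw [e, Matrix.trace_mul_cycle, mpow_mul_mpow hρ, show (-(s/2) + -(s/2) : ℝ) = -s by ring,
    Matrix.trace_mul_comm]

lemma wInnerStar_self_re (hρ : ρ.PosDef) (s : ℝ) (A : Matrix n n ℂ) :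
    (wInnerStar ρ hρ.1 s A A).re = ‖Gmap hρ s A‖ ^ 2 := by
  have h := inner_self_eq_norm_sq (𝕜 := ℂ) (Gmap hρ s A)
  rw [← Gmap_inner hρ s A A]
  exact h

lemma wInnerStar_rho_left (hρ : ρ.PosDef) (s : ℝ) (A : Matrix n n ℂ) :
    wInnerStar ρ hρ.1 s ρ A = A.trace := by
  unfold wInnerStar
  have key : ρ * mpow ρ hρ.1 (s-1) = mpow ρ hρ.1 s := by
    have h1 := mpow_mul_mpow hρ 1 (s-1)
    rw [mpow_one hρ.1] at h1
    rw [h1]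
    congr 1
    ring
  rw [hρ.1.eq, key, Matrix.trace_mul_cycle, mpow_mul_mpow hρ,
    show (-s + s : ℝ) = 0 by ring, mpow_zero, Matrix.one_mul]

end ChannelAux

namespace ChannelAux
lemma sum_mulVec' {n ι : Type*} [Fintype n] [Fintype ι] (f : ι → Matrix n n ℂ) (x : n → ℂ) :
    (∑ u, f u) *ᵥ x = ∑ u, f u *ᵥ x := by
  ext j
  simp only [Matrix.mulVec, dotProduct, Matrix.sum_apply, Finset.sum_mul,
    Finset.sum_apply]
  rw [Finset.sum_comm]

lemma dotProduct_sum' {n ι : Type*} [Fintype n] [Fintype ι] (v : n → ℂ) (f : ι → n → ℂ) :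
    dotProduct v (∑ u, f u) = ∑ u, dotProduct v (f u) := by
  simp only [dotProduct, Finset.sum_apply, Finset.mul_sum]
  rw [Finset.sum_comm]
end ChannelAux

open ChannelAux in
/-- A detailed-balanced quantum channel `T` is a contraction for the inner product
`⟨·,·⟩_{*s}`; if moreover `ρ` is its unique fixed state, its spectrum lies in `[0,1]`, and
`A ≠ 0` is traceless, the contraction is strict. -/
theorem channel_contraction_star_inner {n ι : Type*} [Fintype n] [DecidableEq n] [Fintype ι]
    (ρ : Matrix n n ℂ) (hρ : ρ.PosDef) (htr : ρ.trace = 1)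
    (s : ℝ) (hs : s ∈ Set.Icc (0 : ℝ) 1)
    (T Tdual : Matrix n n ℂ →ₗ[ℂ] Matrix n n ℂ)
    (K : ι → Matrix n n ℂ)
    (hKraus : ∀ X : Matrix n n ℂ, T X = ∑ u, K u * X * (K u)ᴴ)
    (hTP : ∑ u, (K u)ᴴ * K u = 1)
    (hadj : ∀ A B : Matrix n n ℂ, (Aᴴ * Tdual B).trace = ((T A)ᴴ * B).trace)
    (hDB : ∀ A : Matrix n n ℂ,
      T (mpow ρ hρ.1 (1 - s) * A * mpow ρ hρ.1 s)
        = mpow ρ hρ.1 (1 - s) * Tdual A * mpow ρ hρ.1 s) :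
    (∀ A : Matrix n n ℂ,
      (wInnerStar ρ hρ.1 s (T A) (T A)).re ≤ (wInnerStar ρ hρ.1 s A A).re)
    ∧ ((T ρ = ρ)
        → (∀ σ : Matrix n n ℂ, σ.PosSemidef → σ.trace = 1 → T σ = σ → σ = ρ)
        → (∀ (μ : ℂ) (X : Matrix n n ℂ), X ≠ 0 → T X = μ • X →
            μ.im = 0 ∧ 0 ≤ μ.re ∧ μ.re ≤ 1)
        → ∀ A : Matrix n n ℂ, A ≠ 0 → A.trace = 0 →
            (wInnerStar ρ hρ.1 s (T A) (T A)).re < (wInnerStar ρ hρ.1 s A A).re) := by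
  classical
  -- basic consequences of the Kraus representation
  have hTct : ∀ X : Matrix n n ℂ, T (Xᴴ) = (T X)ᴴ := by
    intro X
    rw [hKraus, hKraus, Matrix.conjTranspose_sum]
    refine Finset.sum_congr rfl fun u _ => ?_
    rw [Matrix.conjTranspose_mul, Matrix.conjTranspose_mul, Matrix.conjTranspose_conjTranspose,
      ← Matrix.mul_assoc]
  have hTpsd : ∀ X : Matrix n n ℂ, X.PosSemidef → (T X).PosSemidef := by
    intro X hX
    rw [hKraus]
    refine Matrix.PosSemidef.of_dotProduct_mulVec_nonneg ?_ ?_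
    · show _ᴴ = _
      rw [Matrix.conjTranspose_sum]
      refine Finset.sum_congr rfl fun u _ => ?_
      exact (hX.mul_mul_conjTranspose_same (K u)).1
    · intro x
      rw [sum_mulVec', dotProduct_sum']
      exact Finset.sum_nonneg fun u _ => (hX.mul_mul_conjTranspose_same (K u)).dotProduct_mulVec_nonneg x
  have hTtr : ∀ X : Matrix n n ℂ, (T X).trace = X.trace := by
    intro X
    rw [hKraus, Matrix.trace_sum]
    calc ∑ u, (K u * X * (K u)ᴴ).trace
        = ∑ u, ((K u)ᴴ * (K u * X)).trace := by
          refine Finset.sum_congr rfl fun u _ => ?_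
          rw [Matrix.trace_mul_comm]
      _ = (∑ u, (K u)ᴴ * K u * X).trace := by
          rw [Matrix.trace_sum]
          refine Finset.sum_congr rfl fun u _ => ?_
          rw [Matrix.mul_assoc]
      _ = X.trace := by rw [← Finset.sum_mul, hTP, Matrix.one_mul]
  have hTdual1 : Tdual 1 = 1 := by
    have hCtr : ((Tdual 1 - 1)ᴴ * (Tdual 1 - 1)).trace = 0 := by
      rw [Matrix.mul_sub, Matrix.trace_sub, hadj (Tdual 1 - 1) 1, Matrix.mul_one, Matrix.mul_one,
        Matrix.trace_conjTranspose, Matrix.trace_conjTranspose, hTtr, sub_self]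
    have := trace_conjT_mul_self_zero hCtr
    rwa [sub_eq_zero] at this
  have hfixρ : T ρ = ρ := by
    have h := hDB 1
    rw [Matrix.mul_one, hTdual1, Matrix.mul_one, mpow_mul_mpow hρ,
      show (1 - s + s : ℝ) = 1 by ring, mpow_one hρ.1] at h
    exact h
  -- detailed balance in adjoint form
  have hTstar : ∀ B : Matrix n n ℂ,
      Tdual (mpow ρ hρ.1 (s-1) * B * mpow ρ hρ.1 (-s))
        = mpow ρ hρ.1 (s-1) * T B * mpow ρ hρ.1 (-s) := by
    intro B
    have h := hDB (mpow ρ hρ.1 (s-1) * B * mpow ρ hρ.1 (-s))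
    have harg : mpow ρ hρ.1 (1-s) * (mpow ρ hρ.1 (s-1) * B * mpow ρ hρ.1 (-s)) * mpow ρ hρ.1 s
        = B := by
      calc mpow ρ hρ.1 (1-s) * (mpow ρ hρ.1 (s-1) * B * mpow ρ hρ.1 (-s)) * mpow ρ hρ.1 s
          = (mpow ρ hρ.1 (1-s) * mpow ρ hρ.1 (s-1)) * B *
              (mpow ρ hρ.1 (-s) * mpow ρ hρ.1 s) := by simp only [Matrix.mul_assoc]
        _ = B := by
            rw [mpow_mul_mpow hρ, mpow_mul_mpow hρ, show (1-s) + (s-1) = (0:ℝ) by ring,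
              show (-s) + s = (0:ℝ) by ring, mpow_zero, Matrix.one_mul, Matrix.mul_one]
    rw [harg] at h
    rw [h]
    symm
    set Arg := mpow ρ hρ.1 (s-1) * B * mpow ρ hρ.1 (-s) with hArgdef
    calc mpow ρ hρ.1 (s-1) * (mpow ρ hρ.1 (1-s) * Tdual Arg * mpow ρ hρ.1 s) * mpow ρ hρ.1 (-s)
        = (mpow ρ hρ.1 (s-1) * mpow ρ hρ.1 (1-s)) * Tdual Arg *
            (mpow ρ hρ.1 s * mpow ρ hρ.1 (-s)) := by simp only [Matrix.mul_assoc]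
      _ = Tdual Arg := by
          rw [mpow_mul_mpow hρ, mpow_mul_mpow hρ, show (s-1) + (1-s) = (0:ℝ) by ring,
            show s + -s = (0:ℝ) by ring, mpow_zero, Matrix.one_mul, Matrix.mul_one]
  have wsym : ∀ A B : Matrix n n ℂ,
      wInnerStar ρ hρ.1 s (T A) B = wInnerStar ρ hρ.1 s A (T B) := by
    intro A B
    have h1 : wInnerStar ρ hρ.1 s (T A) B
        = ((T A)ᴴ * (mpow ρ hρ.1 (s-1) * B * mpow ρ hρ.1 (-s))).trace := by
      unfold wInnerStar
      simp only [Matrix.mul_assoc]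
    have h2 : wInnerStar ρ hρ.1 s A (T B)
        = (Aᴴ * (mpow ρ hρ.1 (s-1) * T B * mpow ρ hρ.1 (-s))).trace := by
      unfold wInnerStar
      simp only [Matrix.mul_assoc]
    rw [h1, h2, ← hadj, hTstar]
  -- transport to Euclidean space
  set G := Gmap hρ s with hGdef
  set M := G.toLinearMap ∘ₗ T ∘ₗ G.symm.toLinearMap with hMdef
  have hGinner : ∀ A B : Matrix n n ℂ, inner ℂ (G A) (G B) = wInnerStar ρ hρ.1 s A B :=
    fun A B => Gmap_inner hρ s A B
  have hGre : ∀ A : Matrix n n ℂ, (wInnerStar ρ hρ.1 s A A).re = ‖G A‖ ^ 2 :=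
    fun A => wInnerStar_self_re hρ s A
  have hMG : ∀ A : Matrix n n ℂ, M (G A) = G (T A) := by
    intro A
    rw [hMdef]
    simp only [LinearMap.comp_apply, LinearEquiv.coe_coe, LinearEquiv.symm_apply_apply]
  have hMx : ∀ x, M x = G (T (G.symm x)) := by
    intro x
    rw [hMdef]
    simp only [LinearMap.comp_apply, LinearEquiv.coe_coe]
  have hMsym : M.IsSymmetric := by
    intro x y
    obtain ⟨A, rfl⟩ := G.surjective x
    obtain ⟨B, rfl⟩ := G.surjective y
    rw [hMG, hMG, hGinner, hGinner]
    exact wsym A B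
  have htrans : ∀ (μ : ℂ) (x : EuclideanSpace ℂ (n × n)), x ≠ 0 → M x = μ • x →
      (G.symm x ≠ 0 ∧ T (G.symm x) = μ • (G.symm x)) := by
    intro μ x hx hMxx
    constructor
    · intro h
      apply hx
      rw [← G.apply_symm_apply x, h, map_zero]
    · apply G.injective
      rw [_root_.map_smul, ← hMx, hMxx, G.apply_symm_apply]
  refine ⟨?_, ?_⟩
  · -- contraction
    intro A
    have hb : ∀ (μ : ℝ) (x : EuclideanSpace ℂ (n × n)), x ≠ 0 → M x = ((μ:ℝ):ℂ) • x →
        |μ| ≤ 1 := by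
      intro μ x hx hMxx
      obtain ⟨hXne, hTX⟩ := htrans _ x hx hMxx
      set X := G.symm x with hXdef
      have hTXc : T (Xᴴ) = ((μ:ℝ):ℂ) • Xᴴ := by
        rw [hTct, hTX, Matrix.conjTranspose_smul, Complex.star_def, Complex.conj_ofReal]
      have hY₁H : (X + Xᴴ).IsHermitian := by
        show _ᴴ = _
        rw [Matrix.conjTranspose_add, Matrix.conjTranspose_conjTranspose, add_comm]
      have hY₂H : (Complex.I • (X - Xᴴ)).IsHermitian := by
        show _ᴴ = _
        rw [Matrix.conjTranspose_smul, Matrix.conjTranspose_sub,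
          Matrix.conjTranspose_conjTranspose, Complex.star_def, Complex.conj_I]
        module
      have hTY₁ : T (X + Xᴴ) = ((μ:ℝ):ℂ) • (X + Xᴴ) := by
        rw [map_add, hTX, hTXc, smul_add]
      have hTY₂ : T (Complex.I • (X - Xᴴ)) = ((μ:ℝ):ℂ) • (Complex.I • (X - Xᴴ)) := by
        rw [_root_.map_smul, map_sub, hTX, hTXc]
        module
      by_cases h1 : X + Xᴴ = 0
      · by_cases h2 : Complex.I • (X - Xᴴ) = 0
        · exfalso
          apply hXne
          have hX2 : X = (2:ℂ)⁻¹ • ((X + Xᴴ) - Complex.I • (Complex.I • (X - Xᴴ))) := by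
            rw [smul_smul, Complex.I_mul_I]
            module
          rw [hX2, h1, h2]
          simp
        · exact herm_eig_bound hρ T hTpsd hfixρ μ _ hY₂H h2 hTY₂
      · exact herm_eig_bound hρ T hTpsd hfixρ μ _ hY₁H h1 hTY₁
    have key := symm_norm_sq_le M hMsym hb (G A)
    rw [hGre, hGre]
    calc ‖G (T A)‖ ^ 2 = ‖M (G A)‖ ^ 2 := by rw [hMG]
      _ ≤ ‖G A‖ ^ 2 := key
  · -- strict contraction
    intro hfix huniq hspec A hAne htrA
    have hb2 : ∀ (μ : ℝ) (x : EuclideanSpace ℂ (n × n)), x ≠ 0 → M x = ((μ:ℝ):ℂ) • x →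
        0 ≤ μ ∧ μ ≤ 1 := by
      intro μ x hx hMxx
      obtain ⟨hXne, hTX⟩ := htrans _ x hx hMxx
      have h := hspec _ _ hXne hTX
      refine ⟨?_, ?_⟩
      · have := h.2.1
        rwa [Complex.ofReal_re] at this
      · have := h.2.2
        rwa [Complex.ofReal_re] at this
    have hfixone : ∀ y : EuclideanSpace ℂ (n × n), M y = y →
        inner ℂ y (G A) = 0 := by
      intro y hy
      by_cases hy0 : y = 0
      · rw [hy0, inner_zero_left]
      · have hMy : M y = (1:ℂ) • y := by rw [hy]; simp
        obtain ⟨hXne, hTX⟩ := htrans 1 y hy0 hMy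
        rw [one_smul] at hTX
        set X := G.symm y with hXdef
        have hTXc : T (Xᴴ) = Xᴴ := by rw [hTct, hTX]
        have hY₁H : (X + Xᴴ).IsHermitian := by
          show _ᴴ = _
          rw [Matrix.conjTranspose_add, Matrix.conjTranspose_conjTranspose, add_comm]
        have hY₂H : (Complex.I • (X - Xᴴ)).IsHermitian := by
          show _ᴴ = _
          rw [Matrix.conjTranspose_smul, Matrix.conjTranspose_sub,
            Matrix.conjTranspose_conjTranspose, Complex.star_def, Complex.conj_I]
          module
        have hTY₁ : T (X + Xᴴ) = X + Xᴴ := by rw [map_add, hTX, hTXc]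
        have hTY₂ : T (Complex.I • (X - Xᴴ)) = Complex.I • (X - Xᴴ) := by
          rw [_root_.map_smul, map_sub, hTX, hTXc]
        obtain ⟨t₁, ht₁⟩ := herm_fixed hρ htr T hTpsd hfix huniq _ hY₁H hTY₁
        obtain ⟨t₂, ht₂⟩ := herm_fixed hρ htr T hTpsd hfix huniq _ hY₂H hTY₂
        have hXval : X = ((2:ℂ)⁻¹ * ((t₁:ℂ) - Complex.I * (t₂:ℂ))) • ρ := by
          have hX2 : X = (2:ℂ)⁻¹ • ((X + Xᴴ) - Complex.I • (Complex.I • (X - Xᴴ))) := by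
            rw [smul_smul, Complex.I_mul_I]
            module
          rw [hX2, ht₁, ht₂]
          module
        have hy' : y = G X := (G.apply_symm_apply y).symm
        rw [hy', hXval, _root_.map_smul, inner_smul_left, hGinner, wInnerStar_rho_left hρ s A,
          htrA, mul_zero]
    have hGA : G A ≠ 0 := by
      intro h
      apply hAne
      simpa using congrArg G.symm h
    have key := symm_norm_sq_lt M hMsym hb2 (G A) hfixone hGA
    rw [hGre, hGre]
    calc ‖G (T A)‖ ^ 2 = ‖M (G A)‖ ^ 2 := by rw [hMG]
      _ < ‖G A‖ ^ 2 := key
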